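/- Let S₀, S₁, … be a saturation with respect to the PaRC calculus and I_ω the rewrite system of the model construction. Suppose C is a ground clause with C ∈ S_i* and I_ω ⊭ C. Then there exists a persistent ground clause D such that C ⪰ D and I_ω ⊭ D. -/

import Mathlib

set_option autoImplicit false

namespace PaRC

/-- First-order terms over a signature `F` with arity function `ar`;
variables are natural numbers. -/
inductive Trm (F : Type) (ar : F → ℕ) : Type
  | var : ℕ → Trm F ar
  | app : (f : F) → (Fin (ar f) → Trm F ar) → Trm F ar

variable {F : Type} {ar : F → ℕ}

/-- Substitutions. -/
abbrev Subst (F : Type) (ar : F → ℕ) : Type := ℕ → Trm F ar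

/-- Applying a substitution to a term. -/
def Trm.subst (σ : Subst F ar) : Trm F ar → Trm F ar
  | .var x => σ x
  | .app f a => .app f (fun i => (a i).subst σ)

/-- Composition of substitutions. -/
def Subst.comp (σ τ : Subst F ar) : Subst F ar := fun x => Trm.subst τ (σ x)

/-- A term is ground if it contains no variables. -/
def Trm.IsGround : Trm F ar → Prop
  | .var _ => False
  | .app _ a => ∀ i, (a i).IsGround

/-- Free variables of a term. -/
def Trm.fvars : Trm F ar → Set ℕ
  | .var x => {x}
  | .app _ a => ⋃ i, (a i).fvars

/-- Subterm at a position (list of argument indices). -/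
def Trm.atPos : Trm F ar → List ℕ → Option (Trm F ar)
  | t, [] => some t
  | .var _, _ :: _ => none
  | .app f a, i :: p => if h : i < ar f then Trm.atPos (a ⟨i, h⟩) p else none

/-- Replace the subterm at a given position. -/
def Trm.replace : Trm F ar → List ℕ → Trm F ar → Trm F ar
  | _, [], u => u
  | .var x, _ :: _, _ => .var x
  | .app f a, i :: p, u =>
      if h : i < ar f then
        .app f (Function.update a ⟨i, h⟩ (Trm.replace (a ⟨i, h⟩) p u))
      else .app f a

/-- An equality literal: polarity together with the two sides. -/
structure Lit (F : Type) (ar : F → ℕ) : Type where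
  pos : Bool
  lhs : Trm F ar
  rhs : Trm F ar

def Lit.subst (σ : Subst F ar) (L : Lit F ar) : Lit F ar :=
  ⟨L.pos, Trm.subst σ L.lhs, Trm.subst σ L.rhs⟩

def Lit.IsGround (L : Lit F ar) : Prop := L.lhs.IsGround ∧ L.rhs.IsGround

def Lit.fvars (L : Lit F ar) : Set ℕ := L.lhs.fvars ∪ L.rhs.fvars

/-- A clause is a (finite) multiset of literals. -/
abbrev Clause (F : Type) (ar : F → ℕ) : Type := Multiset (Lit F ar)

def Clause.subst (σ : Subst F ar) (C : Clause F ar) : Clause F ar := C.map (Lit.subst σ)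

def Clause.IsGround (C : Clause F ar) : Prop := ∀ L ∈ C, L.IsGround

def Clause.fvars (C : Clause F ar) : Set ℕ := {x | ∃ L ∈ C, x ∈ L.fvars}

/-- A substitution is grounding for a clause if the instance is ground. -/
def GroundingFor (θ : Subst F ar) (C : Clause F ar) : Prop :=
  Clause.IsGround (Clause.subst θ C)

/-- A term occurs in a clause if it is a subterm of a side of one of its literals. -/
def OccursIn (u : Trm F ar) (C : Clause F ar) : Prop :=
  ∃ L ∈ C, ∃ p, Trm.atPos L.lhs p = some u ∨ Trm.atPos L.rhs p = some u

/-! ### Semantics: Σ-algebras, entailment and satisfiability -/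

/-- A Σ-algebra (first-order structure for the purely equational signature). -/
structure Alg (F : Type) (ar : F → ℕ) : Type 1 where
  carrier : Type
  nonempty : Nonempty carrier
  interp : (f : F) → (Fin (ar f) → carrier) → carrier

def Trm.eval (A : Alg F ar) (v : ℕ → A.carrier) : Trm F ar → A.carrier
  | .var x => v x
  | .app f a => A.interp f (fun i => (a i).eval A v)

def Lit.holds (A : Alg F ar) (v : ℕ → A.carrier) (L : Lit F ar) : Prop :=
  if L.pos then L.lhs.eval A v = L.rhs.eval A v else L.lhs.eval A v ≠ L.rhs.eval A v

/-- A clause is true in an algebra if it is true under every valuation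
(variables are implicitly universally quantified). -/
def Clause.validIn (A : Alg F ar) (C : Clause F ar) : Prop :=
  ∀ v : ℕ → A.carrier, ∃ L ∈ C, Lit.holds A v L

/-- First-order entailment between a set of clauses and a clause. -/
def Entails (S : Set (Clause F ar)) (D : Clause F ar) : Prop :=
  ∀ A : Alg F ar, (∀ C ∈ S, Clause.validIn A C) → Clause.validIn A D

/-- Satisfiability of a set of clauses. -/
def Satisfiable (S : Set (Clause F ar)) : Prop :=
  ∃ A : Alg F ar, ∀ C ∈ S, Clause.validIn A C

/-! ### Simplification orders and their bag extensions -/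

/-- A simplification order: a reduction ordering that is total on ground terms
and has the subterm property. -/
structure SimpOrd (F : Type) (ar : F → ℕ) : Type where
  gt : Trm F ar → Trm F ar → Prop
  trans : ∀ {s t u : Trm F ar}, gt s t → gt t u → gt s u
  irrefl : ∀ s : Trm F ar, ¬ gt s s
  wf : WellFounded (fun s t : Trm F ar => gt t s)
  substStable : ∀ (σ : Subst F ar) {s t : Trm F ar}, gt s t →
    gt (Trm.subst σ s) (Trm.subst σ t)
  ctxStable : ∀ (s : Trm F ar) (p : List ℕ) {l r : Trm F ar}, (Trm.atPos s p).isSome →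
    gt l r → gt (Trm.replace s p l) (Trm.replace s p r)
  subterm : ∀ {s t : Trm F ar} (p : List ℕ), Trm.atPos s p = some t → s ≠ t → gt s t
  totalGround : ∀ {s t : Trm F ar}, s.IsGround → t.IsGround → s ≠ t → gt s t ∨ gt t s

/-- Bag (Dershowitz–Manna multiset) extension of an ordering: `N > M`. -/
def MultGT {α : Type} (r : α → α → Prop) (N M : Multiset α) : Prop :=
  ∃ X Y Z : Multiset α, X ≠ 0 ∧ N = Z + X ∧ M = Z + Y ∧ ∀ y ∈ Y, ∃ x ∈ X, r x y

/-- The multiset of terms associated to a literal: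
`{s, t}` for `s ≈ t` and `{s, s, t, t}` for `s ≉ t`. -/
def Lit.ms (L : Lit F ar) : Multiset (Trm F ar) :=
  if L.pos then {L.lhs, L.rhs} else {L.lhs, L.lhs, L.rhs, L.rhs}

/-- The induced ordering on literals. -/
def litGT (O : SimpOrd F ar) (L M : Lit F ar) : Prop := MultGT O.gt L.ms M.ms

/-- The induced ordering on clauses. -/
def clauseGT (O : SimpOrd F ar) (C D : Clause F ar) : Prop := MultGT (litGT O) C D

def clauseGE (O : SimpOrd F ar) (C D : Clause F ar) : Prop := clauseGT O C D ∨ C = D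

/-- A ground clause `D` is redundant w.r.t. a set `S` of ground clauses if it is
entailed by finitely many clauses of `S` that are all smaller than `D`. -/
def Redundant (O : SimpOrd F ar) (S : Set (Clause F ar)) (D : Clause F ar) : Prop :=
  ∃ Cs : List (Clause F ar), (∀ C ∈ Cs, C ∈ S) ∧
    Entails {C | C ∈ Cs} D ∧ ∀ C ∈ Cs, clauseGT O D C

/-! ### Redundancy formulas and partial clauses -/

/-- Redundancy formulas: first-order formulas over the term algebra extended with
the interpreted predicates `≻` (the simplification order) and equality. -/
inductive RForm (F : Type) (ar : F → ℕ) : Type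
  | falsum : RForm F ar
  | verum : RForm F ar
  | eq (s t : Trm F ar) : RForm F ar
  | gt (s t : Trm F ar) : RForm F ar
  | and (a b : RForm F ar) : RForm F ar
  | or (a b : RForm F ar) : RForm F ar
  | ex (x : ℕ) (a : RForm F ar) : RForm F ar

def RForm.subst (σ : Subst F ar) : RForm F ar → RForm F ar
  | .falsum => .falsum
  | .verum => .verum
  | .eq s t => .eq (Trm.subst σ s) (Trm.subst σ t)
  | .gt s t => .gt (Trm.subst σ s) (Trm.subst σ t)
  | .and a b => .and (a.subst σ) (b.subst σ)
  | .or a b => .or (a.subst σ) (b.subst σ)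
  | .ex x a => .ex x (a.subst fun y => if y = x then Trm.var x else σ y)

def RForm.fvars : RForm F ar → Set ℕ
  | .falsum => ∅
  | .verum => ∅
  | .eq s t => s.fvars ∪ t.fvars
  | .gt s t => s.fvars ∪ t.fvars
  | .and a b => a.fvars ∪ b.fvars
  | .or a b => a.fvars ∪ b.fvars
  | .ex x a => a.fvars \ {x}

/-- Truth of a redundancy formula in the extended term algebra `T_R(Σ)`,
under a valuation `v` mapping variables to (ground) terms. -/
def RForm.realize (O : SimpOrd F ar) (v : Subst F ar) : RForm F ar → Prop
  | .falsum => False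
  | .verum => True
  | .eq s t => Trm.subst v s = Trm.subst v t
  | .gt s t => O.gt (Trm.subst v s) (Trm.subst v t)
  | .and a b => a.realize O v ∧ b.realize O v
  | .or a b => a.realize O v ∨ b.realize O v
  | .ex x a => ∃ g : Trm F ar, g.IsGround ∧ a.realize O (Function.update v x g)

/-- `σ ⊨ R`: every ground instance of `Rσ` is true in `T_R(Σ)`. -/
def RSat (O : SimpOrd F ar) (σ : Subst F ar) (R : RForm F ar) : Prop :=
  ∀ v : Subst F ar, (∀ x, (v x).IsGround) → RForm.realize O v (RForm.subst σ R)

theorem RForm.falsum_fvars_sub (s : Set ℕ) : RForm.fvars (.falsum : RForm F ar) ⊆ s := by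
  intro x hx; simp [RForm.fvars] at hx

/-- `s ⪰ t` as a redundancy formula. -/
def RForm.ge (s t : Trm F ar) : RForm F ar := .or (.gt s t) (.eq s t)

/-- `(s ≐ t) ⪰ l` as a redundancy formula. -/
def Lit.geForm (L : Lit F ar) (l : Trm F ar) : RForm F ar :=
  .or (RForm.ge L.lhs l) (RForm.ge L.rhs l)

/-- `(s ≐ t) ≻ l` as a redundancy formula. -/
def Lit.gtForm (L : Lit F ar) (l : Trm F ar) : RForm F ar :=
  .or (.gt L.lhs l) (.gt L.rhs l)

/-- `C ⪰ l` as a redundancy formula (disjunction over the literals of `C`). -/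
noncomputable def Clause.geForm (C : Clause F ar) (l : Trm F ar) : RForm F ar :=
  C.toList.foldr (fun L acc => RForm.or (Lit.geForm L l) acc) RForm.falsum

/-- `C ≻ l` as a redundancy formula (disjunction over the literals of `C`). -/
noncomputable def Clause.gtForm (C : Clause F ar) (l : Trm F ar) : RForm F ar :=
  C.toList.foldr (fun L acc => RForm.or (Lit.gtForm L l) acc) RForm.falsum

/-- A partial clause `C ⋈ R`: a clause together with a redundancy formula all of
whose free variables occur in the clause. -/
structure PClause (F : Type) (ar : F → ℕ) : Type where
  cl : Clause F ar
  rf : RForm F ar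
  hfv : RForm.fvars rf ⊆ Clause.fvars cl

/-- `⌊C ⋈ R⌋`: the ground instances `Cθ` with `θ ⊭ R`. -/
def pgnd (O : SimpOrd F ar) (pc : PClause F ar) : Set (Clause F ar) :=
  {D | ∃ θ : Subst F ar, D = Clause.subst θ pc.cl ∧ Clause.IsGround D ∧ ¬ RSat O θ pc.rf}

/-- `⌊S⌋` for a set of partial clauses. -/
def gndS (O : SimpOrd F ar) (S : Set (PClause F ar)) : Set (Clause F ar) :=
  ⋃ pc ∈ S, pgnd O pc

/-- `S*`: all ground instances of clauses occurring in `S`. -/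
def gstar (S : Set (PClause F ar)) : Set (Clause F ar) :=
  {D | ∃ pc ∈ S, ∃ θ : Subst F ar, D = Clause.subst θ pc.cl ∧ Clause.IsGround D}

/-! ### The PaRC calculus -/

def IsUnifier (σ : Subst F ar) (s t : Trm F ar) : Prop := Trm.subst σ s = Trm.subst σ t

def IsMGU (σ : Subst F ar) (s t : Trm F ar) : Prop :=
  IsUnifier σ s t ∧ ∀ η : Subst F ar, IsUnifier η s t → ∃ μ : Subst F ar, η = Subst.comp σ μ

/-- A literal selection function satisfying the standard condition w.r.t. `≻`. -/
structure SelFun (F : Type) (ar : F → ℕ) (O : SimpOrd F ar) : Type where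
  sel : Clause F ar → Set (Lit F ar)
  subset : ∀ C : Clause F ar, sel C ⊆ {L | L ∈ C}
  nonemptyOn : ∀ C : Clause F ar, C ≠ 0 → (sel C).Nonempty
  standard : ∀ C : Clause F ar,
    (∃ L ∈ sel C, L.pos = false) ∨ ∀ L ∈ sel C, ∀ M ∈ C, ¬ litGT O M L

/-- The inference rules of the PaRC calculus on partial clauses.
`Inf O sel prems σ concl` means: there is a PaRC inference with premises `prems`,
most general unifier `σ`, and conclusion `concl`; selected literals are the displayed
first literals of the premises. -/
inductive Inf (O : SimpOrd F ar) (sel : SelFun F ar O) :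
    List (PClause F ar) → Subst F ar → Clause F ar → Prop
  | sup {l r : Trm F ar} {C₁ : Clause F ar} {R₁ : RForm F ar}
      {h₁ : RForm.fvars R₁ ⊆ Clause.fvars (Lit.mk true l r ::ₘ C₁)}
      {b : Bool} {s t : Trm F ar} {C₂ : Clause F ar} {R₂ : RForm F ar}
      {h₂ : RForm.fvars R₂ ⊆ Clause.fvars (Lit.mk b s t ::ₘ C₂)}
      {p : List ℕ} {l' : Trm F ar} {σ : Subst F ar} :
      Trm.atPos s p = some l' →
      (∀ x, l' ≠ .var x) →
      IsMGU σ l l' →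
      Lit.mk true l r ∈ sel.sel (Lit.mk true l r ::ₘ C₁) →
      Lit.mk b s t ∈ sel.sel (Lit.mk b s t ::ₘ C₂) →
      ¬ RSat O σ (RForm.ge r l) →
      ¬ RSat O σ (RForm.ge t s) →
      ¬ RSat O σ (Clause.geForm C₁ l) →
      (b = true → ¬ RSat O σ (Clause.geForm C₂ s)) →
      ¬ RSat O σ R₁ →
      ¬ RSat O σ R₂ →
      Inf O sel [⟨Lit.mk true l r ::ₘ C₁, R₁, h₁⟩, ⟨Lit.mk b s t ::ₘ C₂, R₂, h₂⟩] σ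
        (Clause.subst σ (Lit.mk b (Trm.replace s p r) t ::ₘ (C₁ + C₂)))
  | eqres {s t : Trm F ar} {C : Clause F ar} {R : RForm F ar}
      {h : RForm.fvars R ⊆ Clause.fvars (Lit.mk false s t ::ₘ C)} {σ : Subst F ar} :
      IsMGU σ s t →
      Lit.mk false s t ∈ sel.sel (Lit.mk false s t ::ₘ C) →
      ¬ RSat O σ R →
      Inf O sel [⟨Lit.mk false s t ::ₘ C, R, h⟩] σ (Clause.subst σ C)
  | eqfac {s t s' t' : Trm F ar} {C : Clause F ar} {R : RForm F ar}
      {h : RForm.fvars R ⊆ Clause.fvars (Lit.mk true s t ::ₘ Lit.mk true s' t' ::ₘ C)}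
      {σ : Subst F ar} :
      IsMGU σ s s' →
      Lit.mk true s t ∈ sel.sel (Lit.mk true s t ::ₘ Lit.mk true s' t' ::ₘ C) →
      Lit.mk true s' t' ∈ sel.sel (Lit.mk true s t ::ₘ Lit.mk true s' t' ::ₘ C) →
      ¬ RSat O σ (RForm.ge t s) →
      ¬ RSat O σ (RForm.gt t' t) →
      ¬ RSat O σ (Clause.gtForm C s) →
      ¬ RSat O σ R →
      Inf O sel [⟨Lit.mk true s t ::ₘ Lit.mk true s' t' ::ₘ C, R, h⟩] σ
        (Clause.subst σ (Lit.mk true s t ::ₘ Lit.mk false t t' ::ₘ C))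

/-! ### Saturation -/

/-- A saturation w.r.t. the PaRC calculus: `S 0` consists of partial clauses of the
form `C ⋈ ⊥`, and each step is either an inference step or a redundancy step. -/
structure Saturation (O : SimpOrd F ar) (sel : SelFun F ar O) : Type where
  S : ℕ → Set (PClause F ar)
  init : ∀ pc ∈ S 0, pc.rf = RForm.falsum
  step : ∀ i : ℕ,
    (∃ (prems : List (PClause F ar)) (σ : Subst F ar) (concl : Clause F ar),
        (∀ pc ∈ prems, pc ∈ S i) ∧ Inf O sel prems σ concl ∧
        S (i + 1) = S i ∪ {⟨concl, RForm.falsum, RForm.falsum_fvars_sub _⟩}) ∨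
    (∃ pc ∈ S i, ∃ (R₂ : RForm F ar)
        (h : RForm.fvars (RForm.or pc.rf R₂) ⊆ Clause.fvars pc.cl),
        (∀ θ : Subst F ar, GroundingFor θ pc.cl → RSat O θ R₂ →
          Redundant O (gstar (S i)) (Clause.subst θ pc.cl)) ∧
        S (i + 1) = (S i \ {pc}) ∪ {⟨pc.cl, RForm.or pc.rf R₂, h⟩})

variable {O : SimpOrd F ar} {sel : SelFun F ar O}

/-- `S_ω = ⋃ i, S i`. -/
def Saturation.Somega (𝕊 : Saturation O sel) : Set (PClause F ar) := ⋃ i, 𝕊.S i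

/-- The limit `⋃_{i≥0} ⋂_{j≥i} ⌊S_j⌋` of a saturation. -/
def Saturation.limit (𝕊 : Saturation O sel) : Set (Clause F ar) :=
  ⋃ i : ℕ, ⋂ j : ℕ, ⋂ (_ : j ≥ i), gndS O (𝕊.S j)

/-- A ground clause is persistent if it belongs to the limit. -/
def Saturation.Persistent (𝕊 : Saturation O sel) (C : Clause F ar) : Prop := C ∈ 𝕊.limit

/-- Fairness of a saturation. -/
def Saturation.Fair (𝕊 : Saturation O sel) : Prop :=
  ∀ (prems : List (PClause F ar)) (σ : Subst F ar) (concl : Clause F ar) (ρ : Subst F ar),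
    Inf O sel prems σ concl →
    (∀ pc ∈ prems, 𝕊.Persistent (Clause.subst ρ (Clause.subst σ pc.cl))) →
    ∃ i : ℕ, (⟨concl, RForm.falsum, RForm.falsum_fvars_sub _⟩ : PClause F ar) ∈ 𝕊.S i

/-! ### Ground rewrite systems and the model construction -/

/-- One-step ground rewriting with a set of (ground) rewrite rules. -/
def Rw (I : Set (Trm F ar × Trm F ar)) (s t : Trm F ar) : Prop :=
  ∃ lr ∈ I, ∃ p : List ℕ, Trm.atPos s p = some lr.1 ∧ t = Trm.replace s p lr.2

def RwStar (I : Set (Trm F ar × Trm F ar)) : Trm F ar → Trm F ar → Prop :=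
  Relation.ReflTransGen (Rw I)

/-- A term is irreducible (a normal form) in `I`. -/
def NormalForm (I : Set (Trm F ar × Trm F ar)) (t : Trm F ar) : Prop := ∀ u, ¬ Rw I t u

/-- `s` and `t` have the same normal form in `I`. -/
def SameNF (I : Set (Trm F ar × Trm F ar)) (s t : Trm F ar) : Prop :=
  ∃ u : Trm F ar, RwStar I s u ∧ RwStar I t u ∧ NormalForm I u

/-- Truth of a ground clause in the interpretation given by a rewrite system. -/
def TrueIn (I : Set (Trm F ar × Trm F ar)) (C : Clause F ar) : Prop :=
  ∃ L ∈ C, if L.pos then SameNF I L.lhs L.rhs else ¬ SameNF I L.lhs L.rhs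

def NonOverlapping (I : Set (Trm F ar × Trm F ar)) : Prop :=
  ∀ lr ∈ I, ∀ lr' ∈ I, lr ≠ lr' → ∀ p : List ℕ, Trm.atPos (Prod.fst lr) p ≠ some (Prod.fst lr')

def Terminating (I : Set (Trm F ar × Trm F ar)) : Prop :=
  WellFounded (fun s t : Trm F ar => Rw I t s)

def Confluent (I : Set (Trm F ar × Trm F ar)) : Prop :=
  ∀ a b c : Trm F ar, RwStar I a b → RwStar I a c → ∃ d, RwStar I b d ∧ RwStar I c d

/-- The productivity condition of the model construction: there is a partial clause
`(l₁ ≈ r₁ ∨ C ⋈ R) ∈ S_ω` (with `l₁ ≈ r₁` selected) and a grounding substitution `θ`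
with `l₁θ = l`, `l₁θ ≻ r₁θ`, `l₁θ ≻ Cθ`, `θ ⊭ R`, `I_{≺l} ⊭ Cθ`, producing the rule
`l → rr` where `rr = r₁θ`. -/
def ProducesWith (O : SimpOrd F ar) (sel : SelFun F ar O) (Sω : Set (PClause F ar))
    (Ipre : Set (Trm F ar × Trm F ar)) (l rr : Trm F ar) : Prop :=
  ∃ (l₁ r₁ : Trm F ar) (C : Clause F ar) (R : RForm F ar)
    (h : RForm.fvars R ⊆ Clause.fvars (Lit.mk true l₁ r₁ ::ₘ C)) (θ : Subst F ar),
    (⟨Lit.mk true l₁ r₁ ::ₘ C, R, h⟩ : PClause F ar) ∈ Sω ∧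
    Lit.mk true l₁ r₁ ∈ sel.sel (Lit.mk true l₁ r₁ ::ₘ C) ∧
    GroundingFor θ (Lit.mk true l₁ r₁ ::ₘ C) ∧
    Trm.subst θ l₁ = l ∧
    O.gt (Trm.subst θ l₁) (Trm.subst θ r₁) ∧
    (∀ L ∈ Clause.subst θ C, O.gt (Trm.subst θ l₁) L.lhs ∧ O.gt (Trm.subst θ l₁) L.rhs) ∧
    ¬ RSat O θ R ∧
    ¬ TrueIn Ipre (Clause.subst θ C) ∧
    rr = Trm.subst θ r₁

/-- The rewrite system `I_l` of the model construction, defined by well-founded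
recursion on `≻`. -/
noncomputable def Interp (O : SimpOrd F ar) (sel : SelFun F ar O)
    (Sω : Set (PClause F ar)) : Trm F ar → Set (Trm F ar × Trm F ar) :=
  WellFounded.fix (C := fun _ => Set (Trm F ar × Trm F ar)) O.wf
    (fun l Irec =>
      let Ipre : Set (Trm F ar × Trm F ar) := ⋃ (r : Trm F ar), ⋃ (h : O.gt l r), Irec r h
      letI := Classical.propDecidable
      if h : NormalForm Ipre l ∧ ∃ rr, ProducesWith O sel Sω Ipre l rr then
        Ipre ∪ {(l, h.2.choose)}
      else Ipre)

/-- The rewrite system `I_{≺l}` of the model construction. -/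
noncomputable def IPre (O : SimpOrd F ar) (sel : SelFun F ar O)
    (Sω : Set (PClause F ar)) (l : Trm F ar) : Set (Trm F ar × Trm F ar) :=
  ⋃ (r : Trm F ar), ⋃ (_ : O.gt l r), Interp O sel Sω r

/-- The rewrite system `I_ω = ⋃_l I_l` of the model construction. -/
noncomputable def IOmega (O : SimpOrd F ar) (sel : SelFun F ar O)
    (Sω : Set (PClause F ar)) : Set (Trm F ar × Trm F ar) :=
  ⋃ (l : Trm F ar), Interp O sel Sω l

set_option maxHeartbeats 800000

/-! ### Term lemmas -/

def Trm.size : Trm F ar → ℕ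
  | .var _ => 1
  | .app _ a => 1 + ∑ i, (a i).size

theorem Trm.size_pos (t : Trm F ar) : 0 < t.size := by
  cases t <;> simp [Trm.size]

theorem Trm.size_arg_lt {f : F} (a : Fin (ar f) → Trm F ar) (i : Fin (ar f)) :
    (a i).size < (Trm.app f a).size := by
  have : (a i).size ≤ ∑ j, (a j).size :=
    Finset.single_le_sum (f := fun j => (a j).size) (fun _ _ => Nat.zero_le _)
      (Finset.mem_univ i)
  simp only [Trm.size]
  omega

theorem Trm.size_atPos_le {p : List ℕ} : ∀ {s t : Trm F ar}, Trm.atPos s p = some t →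
    t.size ≤ s.size ∧ (p ≠ [] → t.size < s.size) := by
  induction p with
  | nil => intro s t h; simp [Trm.atPos] at h; subst h; exact ⟨le_rfl, fun h => absurd rfl h⟩
  | cons i p ih =>
    intro s t h
    cases s with
    | var x => simp [Trm.atPos] at h
    | app f a =>
      simp only [Trm.atPos] at h
      split at h
      · next hi =>
        have h2 := ih h
        have h3 := Trm.size_arg_lt a ⟨i, hi⟩
        exact ⟨le_of_lt (lt_of_le_of_lt h2.1 h3), fun _ => lt_of_le_of_lt h2.1 h3⟩
      · exact absurd h (by simp)

theorem Trm.atPos_self_ne_nil {s : Trm F ar} {p : List ℕ} (h : Trm.atPos s p = some s) :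
    p = [] := by
  by_contra hp
  exact absurd ((Trm.size_atPos_le h).2 hp) (lt_irrefl _)

theorem Trm.replace_self : ∀ {s : Trm F ar} {p : List ℕ} {u : Trm F ar},
    Trm.atPos s p = some u → Trm.replace s p u = s := by
  intro s p
  induction p generalizing s with
  | nil => intro u h; simp [Trm.atPos] at h; simp [Trm.replace, h]
  | cons i p ih =>
    intro u h
    cases s with
    | var x => simp [Trm.atPos] at h
    | app f a =>
      simp only [Trm.atPos] at h
      split at h
      · next hi =>
        simp only [Trm.replace, dif_pos hi, ih h, Function.update_eq_self]
      · exact absurd h (by simp)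

theorem Trm.atPos_append (p q : List ℕ) : ∀ s : Trm F ar,
    Trm.atPos s (p ++ q) = (Trm.atPos s p).bind (fun u => Trm.atPos u q) := by
  induction p with
  | nil => intro s; simp [Trm.atPos]
  | cons i p ih =>
    intro s
    cases s with
    | var x => simp [Trm.atPos]
    | app f a =>
      simp only [List.cons_append, Trm.atPos]
      split
      · exact ih _
      · simp

theorem Trm.subst_ground {t : Trm F ar} (ht : t.IsGround) (σ : Subst F ar) :
    Trm.subst σ t = t := by
  induction t with
  | var x => exact absurd ht id
  | app f a ih =>
    simp only [Trm.subst]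
    congr 1
    funext i
    exact ih i (ht i)

theorem Trm.ground_replace : ∀ {s : Trm F ar} (p : List ℕ) {u : Trm F ar},
    s.IsGround → u.IsGround → (Trm.replace s p u).IsGround := by
  intro s p
  induction p generalizing s with
  | nil => intro u _ hu; cases s <;> exact hu
  | cons i p ih =>
    intro u hs hu
    cases s with
    | var x => exact absurd hs id
    | app f a =>
      simp only [Trm.replace]
      split
      · next hi =>
        intro j
        by_cases hj : j = ⟨i, hi⟩
        · subst hj; rw [Function.update_self]; exact ih (hs _) hu
        · rw [Function.update_of_ne hj]; exact hs j
      · exact hs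

theorem Trm.ground_atPos : ∀ {s t : Trm F ar} {p : List ℕ},
    Trm.atPos s p = some t → s.IsGround → t.IsGround := by
  intro s t p
  induction p generalizing s with
  | nil => intro h hs; simp [Trm.atPos] at h; subst h; exact hs
  | cons i p ih =>
    intro h hs
    cases s with
    | var x => simp [Trm.atPos] at h
    | app f a =>
      simp only [Trm.atPos] at h
      split at h
      · exact ih h (hs _)
      · exact absurd h (by simp)

theorem Trm.ground_of_subst_ground {σ : Subst F ar} : ∀ {t : Trm F ar},
    (Trm.subst σ t).IsGround → ∀ x ∈ t.fvars, (σ x).IsGround := by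
  intro t
  induction t with
  | var y => intro h x hx; simp [Trm.fvars] at hx; subst hx; exact h
  | app f a ih =>
    intro h x hx
    simp only [Trm.fvars, Set.mem_iUnion] at hx
    obtain ⟨i, hi⟩ := hx
    exact ih i (h i) x hi

theorem Trm.fvars_ground {t : Trm F ar} (ht : t.IsGround) : t.fvars = ∅ := by
  induction t with
  | var x => exact absurd ht id
  | app f a ih =>
    simp only [Trm.fvars]
    exact Set.iUnion_eq_empty.mpr fun i => ih i (ht i)

theorem Trm.fvars_subst_sub (σ : Subst F ar) : ∀ t : Trm F ar,
    (Trm.subst σ t).fvars ⊆ ⋃ x ∈ t.fvars, (σ x).fvars := by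
  intro t
  induction t with
  | var y =>
    intro z hz
    exact Set.mem_iUnion.mpr ⟨y, Set.mem_iUnion.mpr ⟨rfl, hz⟩⟩
  | app f a ih =>
    simp only [Trm.subst, Trm.fvars]
    intro z hz
    simp only [Set.mem_iUnion] at hz
    obtain ⟨i, hi⟩ := hz
    have h2 := ih i hi
    rw [Set.mem_iUnion₂] at h2
    obtain ⟨x, hx, hzx⟩ := h2
    rw [Set.mem_iUnion₂]
    exact ⟨x, Set.mem_iUnion.mpr ⟨i, hx⟩, hzx⟩


/-! ### Position lemmas -/

theorem posSplit : ∀ p q : List ℕ, (∃ z, q = p ++ z) ∨ (∃ z, p = q ++ z) ∨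
    ∃ (w : List ℕ) (i j : ℕ) (p' q' : List ℕ), i ≠ j ∧ p = w ++ i :: p' ∧ q = w ++ j :: q' := by
  intro p
  induction p with
  | nil => intro q; exact Or.inl ⟨q, rfl⟩
  | cons i p ih =>
    intro q
    cases q with
    | nil => exact Or.inr (Or.inl ⟨i :: p, rfl⟩)
    | cons j q =>
      by_cases hij : i = j
      · subst hij
        rcases ih q with ⟨z, rfl⟩ | ⟨z, hz⟩ | ⟨w, i', j', p', q', hne, hp, hq⟩
        · exact Or.inl ⟨z, rfl⟩
        · exact Or.inr (Or.inl ⟨z, by rw [hz]; rfl⟩)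
        · exact Or.inr (Or.inr ⟨i :: w, i', j', p', q', hne, by rw [hp]; rfl, by rw [hq]; rfl⟩)
      · exact Or.inr (Or.inr ⟨[], i, j, p, q, hij, rfl, rfl⟩)

theorem Fin.mk_ne_mk' {n i j : ℕ} {hi : i < n} {hj : j < n} (h : i ≠ j) :
    (⟨i, hi⟩ : Fin n) ≠ ⟨j, hj⟩ := by
  simp [Fin.ext_iff]; omega

theorem Trm.atPos_replace_par : ∀ (w : List ℕ) {i j : ℕ} (hij : i ≠ j) (p' q' : List ℕ)
    (s u : Trm F ar),
    Trm.atPos (Trm.replace s (w ++ i :: p') u) (w ++ j :: q') = Trm.atPos s (w ++ j :: q') := by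
  intro w
  induction w with
  | nil =>
    intro i j hij p' q' s u
    cases s with
    | var x => rfl
    | app f a =>
      simp only [List.nil_append, Trm.replace]
      split
      · next hi =>
        simp only [Trm.atPos]
        split
        · next hj =>
          rw [Function.update_of_ne (Fin.mk_ne_mk' (fun h => hij h.symm))]
        · rfl
      · rfl
  | cons k w ih =>
    intro i j hij p' q' s u
    cases s with
    | var x => rfl
    | app f a =>
      simp only [List.cons_append, Trm.replace]
      split
      · next hk =>
        simp only [Trm.atPos]
        split
        · next hk2 =>
          rw [show (⟨k, hk2⟩ : Fin (ar f)) = ⟨k, hk⟩ from rfl, Function.update_self]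
          simpa using ih hij p' q' (a ⟨k, hk⟩) u
        · next h2 => exact absurd hk h2
      · rfl

theorem Trm.replace_par_comm : ∀ (w : List ℕ) {i j : ℕ} (hij : i ≠ j) (p' q' : List ℕ)
    (s u v : Trm F ar),
    Trm.replace (Trm.replace s (w ++ i :: p') u) (w ++ j :: q') v =
    Trm.replace (Trm.replace s (w ++ j :: q') v) (w ++ i :: p') u := by
  intro w
  induction w with
  | nil =>
    intro i j hij p' q' s u v
    cases s with
    | var x => rfl
    | app f a =>
      simp only [List.nil_append, Trm.replace]
      by_cases hi : i < ar f
      · by_cases hj : j < ar f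
        · simp only [dif_pos hi, dif_pos hj, Trm.replace, dif_pos hi, dif_pos hj]
          rw [Function.update_of_ne (Fin.mk_ne_mk' (fun h => hij h.symm)),
            Function.update_of_ne (Fin.mk_ne_mk' hij),
            Function.update_comm (Fin.mk_ne_mk' hij)]
        · simp only [dif_pos hi, dif_neg hj, Trm.replace, dif_pos hi, dif_neg hj]
      · by_cases hj : j < ar f
        · simp only [dif_neg hi, dif_pos hj, Trm.replace, dif_neg hi, dif_pos hj]
        · simp only [dif_neg hi, dif_neg hj, Trm.replace, dif_neg hi, dif_neg hj]
  | cons k w ih =>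
    intro i j hij p' q' s u v
    cases s with
    | var x => rfl
    | app f a =>
      simp only [List.cons_append, Trm.replace]
      by_cases hk : k < ar f
      · simp only [dif_pos hk, Trm.replace, dif_pos hk, Function.update_self,
          Function.update_idem, List.append_eq]
        rw [ih hij p' q']
      · simp only [dif_neg hk, Trm.replace, dif_neg hk]

theorem Trm.atPos_replace_some : ∀ {s : Trm F ar} {p : List ℕ} {l : Trm F ar},
    Trm.atPos s p = some l → ∀ u : Trm F ar, Trm.atPos (Trm.replace s p u) p = some u := by
  intro s p
  induction p generalizing s with
  | nil => intro l h u; cases s <;> simp [Trm.replace, Trm.atPos]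
  | cons i p ih =>
    intro l h u
    cases s with
    | var x => simp [Trm.atPos] at h
    | app f a =>
      simp only [Trm.atPos] at h
      split at h
      · next hi =>
        simp only [Trm.replace, dif_pos hi, Trm.atPos, dif_pos hi, Function.update_self]
        exact ih h u
      · exact absurd h (by simp)


/-! ### Rewriting lemmas -/

section Rewriting
variable {I : Set (Trm F ar × Trm F ar)}

theorem Rw.ctx {f : F} (a : Fin (ar f) → Trm F ar) (k : Fin (ar f)) {s t : Trm F ar}
    (h : Rw I s t) :
    Rw I (.app f (Function.update a k s)) (.app f (Function.update a k t)) := by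
  obtain ⟨lr, hlr, p, hp, rfl⟩ := h
  refine ⟨lr, hlr, (k : ℕ) :: p, ?_, ?_⟩
  · simp only [Trm.atPos, dif_pos k.isLt, Fin.eta, Function.update_self]
    exact hp
  · simp only [Trm.replace, dif_pos k.isLt, Fin.eta, Function.update_self,
      Function.update_idem]

theorem RwStar.ctx {f : F} (a : Fin (ar f) → Trm F ar) (k : Fin (ar f)) {s t : Trm F ar}
    (h : RwStar I s t) :
    RwStar I (.app f (Function.update a k s)) (.app f (Function.update a k t)) := by
  induction h with
  | refl => exact Relation.ReflTransGen.refl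
  | tail _ hst ih => exact ih.tail (Rw.ctx a k hst)

theorem RwStar.app_pointwise {f : F} {b c : Fin (ar f) → Trm F ar}
    (h : ∀ i, RwStar I (b i) (c i)) : RwStar I (.app f b) (.app f c) := by
  classical
  have aux : ∀ l : List (Fin (ar f)),
      RwStar I (.app f b) (.app f (fun i => if i ∈ l then c i else b i)) := by
    intro l
    induction l with
    | nil => exact Relation.ReflTransGen.refl
    | cons a l ih =>
      by_cases ha : a ∈ l
      · have : (fun i => if i ∈ a :: l then c i else b i) =
            (fun i => if i ∈ l then c i else b i) := by
          funext i
          by_cases hi : i ∈ l <;> by_cases hia : i = a <;> simp [hi, hia, ha]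
        rw [this]; exact ih
      · have heq : (fun i => if i ∈ a :: l then c i else b i) =
            Function.update (fun i => if i ∈ l then c i else b i) a (c a) := by
          funext i
          by_cases hia : i = a
          · subst hia; simp [Function.update_self]
          · simp [Function.update_of_ne hia, hia]
        rw [heq]
        refine ih.trans ?_
        have h2 : RwStar I ((fun i => if i ∈ l then c i else b i) a) (c a) := by
          simp [ha]; exact h a
        have h3 := RwStar.ctx (f := f) (fun i => if i ∈ l then c i else b i) a h2
        rwa [Function.update_eq_self] at h3
  have := aux (List.finRange (ar f))
  have heq : (fun i => if i ∈ List.finRange (ar f) then c i else b i) = c := by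
    funext i; simp [List.mem_finRange]
  rwa [heq] at this

theorem Rw.gt_of (O : SimpOrd F ar) (hI : ∀ p ∈ I, O.gt p.1 p.2) {s t : Trm F ar}
    (h : Rw I s t) : O.gt s t := by
  obtain ⟨lr, hlr, p, hp, rfl⟩ := h
  have h2 := O.ctxStable s p (by rw [hp]; rfl) (hI lr hlr)
  rwa [Trm.replace_self hp] at h2

theorem exists_nf (O : SimpOrd F ar) (hI : ∀ p ∈ I, O.gt p.1 p.2) (s : Trm F ar) :
    ∃ u, RwStar I s u ∧ NormalForm I u := by
  have hwf : WellFounded (fun t s : Trm F ar => Rw I s t) :=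
    Subrelation.wf (fun {t s} h => Rw.gt_of O hI h) O.wf
  induction s using hwf.induction with
  | _ s ih =>
    by_cases hs : ∃ t, Rw I s t
    · obtain ⟨t, ht⟩ := hs
      obtain ⟨u, h1, h2⟩ := ih t ht
      exact ⟨u, Relation.ReflTransGen.head ht h1, h2⟩
    · exact ⟨s, Relation.ReflTransGen.refl, fun u hu => hs ⟨u, hu⟩⟩

theorem Rw.ground_pres (hg : ∀ p ∈ I, (Prod.snd p).IsGround) {s t : Trm F ar}
    (h : Rw I s t) (hs : s.IsGround) : t.IsGround := by
  obtain ⟨lr, hlr, p, hp, rfl⟩ := h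
  exact Trm.ground_replace p hs (hg lr hlr)

theorem RwStar.ground_pres (hg : ∀ p ∈ I, (Prod.snd p).IsGround) {s t : Trm F ar}
    (h : RwStar I s t) (hs : s.IsGround) : t.IsGround := by
  induction h with
  | refl => exact hs
  | tail _ h2 ih => exact Rw.ground_pres hg h2 ih

theorem Rw.diamondish
    (huniq : ∀ l r r' : Trm F ar, (l, r) ∈ I → (l, r') ∈ I → r = r')
    (hno : ∀ lr ∈ I, ∀ lr' ∈ I, ∀ p : List ℕ, p ≠ [] →
      Trm.atPos (Prod.fst lr) p ≠ some (Prod.fst lr'))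
    {s t₁ t₂ : Trm F ar} (h1 : Rw I s t₁) (h2 : Rw I s t₂) :
    t₁ = t₂ ∨ ∃ d, Rw I t₁ d ∧ Rw I t₂ d := by
  obtain ⟨⟨l₁, r₁⟩, hlr₁, p, hp₁, rfl⟩ := h1
  obtain ⟨⟨l₂, r₂⟩, hlr₂, q, hp₂, rfl⟩ := h2
  rcases posSplit p q with ⟨z, rfl⟩ | ⟨z, rfl⟩ | ⟨w, i, j, p', q', hij, rfl, rfl⟩
  · -- q = p ++ z
    cases z with
    | nil =>
      left
      rw [List.append_nil] at hp₂
      have hl : l₁ = l₂ := by rw [hp₁] at hp₂; exact Option.some.inj hp₂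
      subst hl
      rw [List.append_nil, huniq l₁ r₁ r₂ hlr₁ hlr₂]
    | cons z0 zs =>
      exfalso
      have h3 : Trm.atPos l₁ (z0 :: zs) = some l₂ := by
        rw [← hp₂, Trm.atPos_append, hp₁]; rfl
      exact hno (l₁, r₁) hlr₁ (l₂, r₂) hlr₂ (z0 :: zs) (by simp) h3
  · -- p = q ++ z
    cases z with
    | nil =>
      left
      rw [List.append_nil] at hp₁
      have hl : l₂ = l₁ := by rw [hp₂] at hp₁; exact Option.some.inj hp₁
      subst hl
      rw [List.append_nil, huniq l₂ r₁ r₂ hlr₁ hlr₂]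
    | cons z0 zs =>
      exfalso
      have h3 : Trm.atPos l₂ (z0 :: zs) = some l₁ := by
        rw [← hp₁, Trm.atPos_append, hp₂]; rfl
      exact hno (l₂, r₂) hlr₂ (l₁, r₁) hlr₁ (z0 :: zs) (by simp) h3
  · right
    refine ⟨Trm.replace (Trm.replace s (w ++ i :: p') r₁) (w ++ j :: q') r₂, ?_, ?_⟩
    · refine ⟨(l₂, r₂), hlr₂, w ++ j :: q', ?_, rfl⟩
      rw [Trm.atPos_replace_par w hij p' q' s r₁]
      exact hp₂
    · rw [Trm.replace_par_comm w hij p' q' s r₁ r₂]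
      refine ⟨(l₁, r₁), hlr₁, w ++ i :: p', ?_, rfl⟩
      rw [Trm.atPos_replace_par w (fun h => hij h.symm) q' p' s r₂]
      exact hp₁

end Rewriting


section Confluence
variable {I : Set (Trm F ar × Trm F ar)}

theorem nf_rwStar {u d : Trm F ar} (hu : NormalForm I u) (h : RwStar I u d) : u = d := by
  induction h with
  | refl => rfl
  | tail h1 h2 ih => rw [← ih] at h2; exact absurd h2 (hu _)

theorem nf_unique
    (huniq : ∀ l r r' : Trm F ar, (l, r) ∈ I → (l, r') ∈ I → r = r')
    (hno : ∀ lr ∈ I, ∀ lr' ∈ I, ∀ p : List ℕ, p ≠ [] →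
      Trm.atPos (Prod.fst lr) p ≠ some (Prod.fst lr'))
    {s u u' : Trm F ar} (h1 : RwStar I s u) (h2 : RwStar I s u')
    (hu : NormalForm I u) (hu' : NormalForm I u') : u = u' := by
  have hcr := Relation.church_rosser (r := Rw I) ?_ h1 h2
  · obtain ⟨d, hd1, hd2⟩ := hcr
    rw [nf_rwStar hu hd1, nf_rwStar hu' hd2]
  · intro a b c hab hac
    rcases Rw.diamondish huniq hno hab hac with rfl | ⟨d, hbd, hcd⟩
    · exact ⟨b, Relation.ReflGen.refl, Relation.ReflTransGen.refl⟩
    · exact ⟨d, Relation.ReflGen.single hbd, Relation.ReflTransGen.single hcd⟩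

theorem sameNF_refl (hnf : ∀ s : Trm F ar, ∃ u, RwStar I s u ∧ NormalForm I u)
    (s : Trm F ar) : SameNF I s s := by
  obtain ⟨u, h1, h2⟩ := hnf s
  exact ⟨u, h1, h1, h2⟩

theorem sameNF_symm {s t : Trm F ar} (h : SameNF I s t) : SameNF I t s := by
  obtain ⟨u, h1, h2, h3⟩ := h
  exact ⟨u, h2, h1, h3⟩

theorem sameNF_trans
    (hjoin : ∀ s u u' : Trm F ar, RwStar I s u → RwStar I s u' →
      NormalForm I u → NormalForm I u' → u = u')
    {s t v : Trm F ar} (h1 : SameNF I s t) (h2 : SameNF I t v) : SameNF I s v := by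
  obtain ⟨u, hsu, htu, hu⟩ := h1
  obtain ⟨u', htu', hvu', hu'⟩ := h2
  have : u = u' := hjoin t u u' htu htu' hu hu'
  subst this
  exact ⟨u, hsu, hvu', hu⟩

theorem sameNF_of_rwStar_left {s s' t : Trm F ar} (h : RwStar I s s') (hst : SameNF I s' t) :
    SameNF I s t := by
  obtain ⟨u, h1, h2, h3⟩ := hst
  exact ⟨u, h.trans h1, h2, h3⟩

theorem sameNF_app (hnf : ∀ s : Trm F ar, ∃ u, RwStar I s u ∧ NormalForm I u)
    {f : F} {b c : Fin (ar f) → Trm F ar} (h : ∀ i, SameNF I (b i) (c i)) :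
    SameNF I (.app f b) (.app f c) := by
  choose u hbu hcu _ using h
  obtain ⟨w, hw1, hw2⟩ := hnf (.app f u)
  exact ⟨w, (RwStar.app_pointwise hbu).trans hw1, (RwStar.app_pointwise hcu).trans hw1, hw2⟩

end Confluence


/-! ### Structure of the model construction -/

section InterpLemmas
variable (O : SimpOrd F ar) (sel : SelFun F ar O) (Sω : Set (PClause F ar))

theorem Interp_cases (l : Trm F ar) :
    (¬ (NormalForm (IPre O sel Sω l) l ∧
        ∃ rr, ProducesWith O sel Sω (IPre O sel Sω l) l rr) ∧
      Interp O sel Sω l = IPre O sel Sω l) ∨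
    (∃ h : NormalForm (IPre O sel Sω l) l ∧
        ∃ rr, ProducesWith O sel Sω (IPre O sel Sω l) l rr,
      Interp O sel Sω l = IPre O sel Sω l ∪ {(l, h.2.choose)}) := by
  by_cases h : NormalForm (IPre O sel Sω l) l ∧
      ∃ rr, ProducesWith O sel Sω (IPre O sel Sω l) l rr
  · right
    refine ⟨h, ?_⟩
    show WellFounded.fix (C := fun _ => Set (Trm F ar × Trm F ar)) O.wf _ l = _
    rw [WellFounded.fix_eq]
    exact dif_pos h
  · left
    refine ⟨h, ?_⟩
    show WellFounded.fix (C := fun _ => Set (Trm F ar × Trm F ar)) O.wf _ l = _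
    rw [WellFounded.fix_eq]
    exact dif_neg h

theorem IPre_subset_Interp (l : Trm F ar) : IPre O sel Sω l ⊆ Interp O sel Sω l := by
  rcases Interp_cases O sel Sω l with ⟨_, heq⟩ | ⟨_, heq⟩
  · rw [heq]
  · rw [heq]; exact Set.subset_union_left

theorem Interp_subset_IPre {l m : Trm F ar} (h : O.gt l m) :
    Interp O sel Sω m ⊆ IPre O sel Sω l := by
  intro x hx
  exact Set.mem_iUnion.mpr ⟨m, Set.mem_iUnion.mpr ⟨h, hx⟩⟩

theorem rule_master : ∀ m : Trm F ar, ∀ pr ∈ Interp O sel Sω m,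
    ∃ h : NormalForm (IPre O sel Sω pr.1) pr.1 ∧
        ∃ rr, ProducesWith O sel Sω (IPre O sel Sω pr.1) pr.1 rr,
      pr.2 = h.2.choose ∧ pr ∈ Interp O sel Sω pr.1 := by
  intro m
  induction m using O.wf.induction with
  | _ m ih =>
    intro pr hpr
    rcases Interp_cases O sel Sω m with ⟨_, heq⟩ | ⟨h, heq⟩
    · rw [heq] at hpr
      obtain ⟨r, hr⟩ := Set.mem_iUnion.mp hpr
      obtain ⟨hgt, hpr2⟩ := Set.mem_iUnion.mp hr
      exact ih r hgt pr hpr2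
    · rw [heq] at hpr
      rcases hpr with hpr | hpr
      · obtain ⟨r, hr⟩ := Set.mem_iUnion.mp hpr
        obtain ⟨hgt, hpr2⟩ := Set.mem_iUnion.mp hr
        exact ih r hgt pr hpr2
      · have hpr' : pr = (m, h.2.choose) := hpr
        subst hpr'
        exact ⟨h, rfl, by rw [heq]; exact Or.inr rfl⟩

theorem mem_IOmega {pr : Trm F ar × Trm F ar} (h : pr ∈ IOmega O sel Sω) :
    ∃ h' : NormalForm (IPre O sel Sω pr.1) pr.1 ∧
        ∃ rr, ProducesWith O sel Sω (IPre O sel Sω pr.1) pr.1 rr,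
      pr.2 = h'.2.choose ∧ pr ∈ Interp O sel Sω pr.1 ∧
      ProducesWith O sel Sω (IPre O sel Sω pr.1) pr.1 pr.2 := by
  obtain ⟨m, hm⟩ := Set.mem_iUnion.mp h
  obtain ⟨h', h2, h3⟩ := rule_master O sel Sω m pr hm
  refine ⟨h', h2, h3, ?_⟩
  rw [h2]
  exact h'.2.choose_spec

theorem groundingFor_head {θ : Subst F ar} {L : Lit F ar} {C : Clause F ar}
    (h : GroundingFor θ (L ::ₘ C)) : (Lit.subst θ L).IsGround :=
  h _ (Multiset.mem_map_of_mem _ (Multiset.mem_cons_self L C))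

theorem producesWith_facts {Ipre : Set (Trm F ar × Trm F ar)} {l rr : Trm F ar}
    (h : ProducesWith O sel Sω Ipre l rr) :
    O.gt l rr ∧ l.IsGround ∧ rr.IsGround := by
  obtain ⟨l₁, r₁, C, R, hfv, θ, _, _, hgnd, hl, hgt, _, _, _, hrr⟩ := h
  have hlit := groundingFor_head hgnd
  subst hrr
  rw [← hl]
  exact ⟨hgt, hlit.1, hlit.2⟩

theorem IOmega_gt {pr : Trm F ar × Trm F ar} (h : pr ∈ IOmega O sel Sω) :
    O.gt pr.1 pr.2 := by
  obtain ⟨_, _, _, hp⟩ := mem_IOmega O sel Sω h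
  exact (producesWith_facts O sel Sω hp).1

theorem IOmega_ground {pr : Trm F ar × Trm F ar} (h : pr ∈ IOmega O sel Sω) :
    (Prod.fst pr).IsGround ∧ (Prod.snd pr).IsGround := by
  obtain ⟨_, _, _, hp⟩ := mem_IOmega O sel Sω h
  exact ⟨(producesWith_facts O sel Sω hp).2.1, (producesWith_facts O sel Sω hp).2.2⟩

theorem IOmega_lhs_nf {pr : Trm F ar × Trm F ar} (h : pr ∈ IOmega O sel Sω) :
    NormalForm (IPre O sel Sω pr.1) pr.1 := by
  obtain ⟨h', _, _, _⟩ := mem_IOmega O sel Sω h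
  exact h'.1

theorem IOmega_uniq {l r r' : Trm F ar}
    (h : (l, r) ∈ IOmega O sel Sω) (h' : (l, r') ∈ IOmega O sel Sω) : r = r' := by
  obtain ⟨h1, h2, _⟩ := mem_IOmega O sel Sω h
  obtain ⟨h1', h2', _⟩ := mem_IOmega O sel Sω h'
  exact h2.trans h2'.symm

theorem IOmega_no_overlap : ∀ lr ∈ IOmega O sel Sω, ∀ lr' ∈ IOmega O sel Sω,
    ∀ p : List ℕ, p ≠ [] → Trm.atPos (Prod.fst lr) p ≠ some (Prod.fst lr') := by
  rintro lr hlr lr' hlr' p hp hpos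
  by_cases hll : lr.1 = lr'.1
  · rw [← hll] at hpos
    exact hp (Trm.atPos_self_ne_nil hpos)
  · have hgt : O.gt lr.1 lr'.1 := by
      rcases O.totalGround (IOmega_ground O sel Sω hlr).1 (IOmega_ground O sel Sω hlr').1 hll
        with hg | hg
      · exact hg
      · exact O.subterm p hpos hll
    obtain ⟨_, _, hmem', _⟩ := mem_IOmega O sel Sω hlr'
    have hmem2 : lr' ∈ IPre O sel Sω lr.1 := Interp_subset_IPre O sel Sω hgt hmem'
    have hrw : Rw (IPre O sel Sω lr.1) lr.1 (Trm.replace lr.1 p lr'.2) :=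
      ⟨lr', hmem2, p, hpos, rfl⟩
    exact IOmega_lhs_nf O sel Sω hlr _ hrw

theorem IPre_subset_IOmega (l : Trm F ar) : IPre O sel Sω l ⊆ IOmega O sel Sω := by
  intro x hx
  obtain ⟨r, hr⟩ := Set.mem_iUnion.mp hx
  obtain ⟨_, h2⟩ := Set.mem_iUnion.mp hr
  exact Set.mem_iUnion.mpr ⟨r, h2⟩

end InterpLemmas


/-! ### The term-model algebra -/

section Algebra
variable {I : Set (Trm F ar × Trm F ar)}

def groundTrm (c : F) (hc : ar c = 0) : Trm F ar :=
  .app c (fun i => (Fin.cast hc i).elim0)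

theorem groundTrm_ground (c : F) (hc : ar c = 0) : (groundTrm c hc).IsGround :=
  fun i => (Fin.cast hc i).elim0

noncomputable def nfSetoid (I : Set (Trm F ar × Trm F ar))
    (hnf : ∀ s : Trm F ar, ∃ u, RwStar I s u ∧ NormalForm I u)
    (hjoin : ∀ s u u' : Trm F ar, RwStar I s u → RwStar I s u' →
      NormalForm I u → NormalForm I u' → u = u') :
    Setoid {t : Trm F ar // t.IsGround} :=
  ⟨fun a b => SameNF I a.1 b.1,
    ⟨fun a => sameNF_refl hnf a.1, sameNF_symm, sameNF_trans hjoin⟩⟩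

noncomputable def nfAlg (I : Set (Trm F ar × Trm F ar))
    (hnf : ∀ s : Trm F ar, ∃ u, RwStar I s u ∧ NormalForm I u)
    (hjoin : ∀ s u u' : Trm F ar, RwStar I s u → RwStar I s u' →
      NormalForm I u → NormalForm I u' → u = u')
    (c : F) (hc : ar c = 0) : Alg F ar where
  carrier := Quotient (nfSetoid I hnf hjoin)
  nonempty := ⟨Quotient.mk _ ⟨groundTrm c hc, groundTrm_ground c hc⟩⟩
  interp f v := Quotient.mk _ ⟨.app f (fun i => ((v i).out).1), fun i => ((v i).out).2⟩

variable (hnf : ∀ s : Trm F ar, ∃ u, RwStar I s u ∧ NormalForm I u)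
    (hjoin : ∀ s u u' : Trm F ar, RwStar I s u → RwStar I s u' →
      NormalForm I u → NormalForm I u' → u = u')
    (c : F) (hc : ar c = 0)

theorem nfAlg_eval (v : ℕ → (nfAlg I hnf hjoin c hc).carrier) :
    ∀ (t : Trm F ar) (ht : t.IsGround),
      Trm.eval (nfAlg I hnf hjoin c hc) v t = Quotient.mk (nfSetoid I hnf hjoin) ⟨t, ht⟩ := by
  intro t
  induction t with
  | var x => intro ht; exact absurd ht id
  | app f a ih =>
    intro ht
    show Quotient.mk _ _ = _
    apply Quotient.sound
    show SameNF I (Trm.app f _) (Trm.app f a)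
    apply sameNF_app hnf
    intro i
    have h1 : Quotient.mk (nfSetoid I hnf hjoin) ((Trm.eval (nfAlg I hnf hjoin c hc) v (a i)).out)
        = Quotient.mk (nfSetoid I hnf hjoin) ⟨a i, ht i⟩ := by
      refine (Quotient.out_eq (s := nfSetoid I hnf hjoin) _).trans ?_
      exact ih i (ht i)
    exact Quotient.exact h1

theorem nfAlg_lit (v : ℕ → (nfAlg I hnf hjoin c hc).carrier) (L : Lit F ar)
    (hL : L.IsGround) :
    Lit.holds (nfAlg I hnf hjoin c hc) v L ↔
      (if L.pos then SameNF I L.lhs L.rhs else ¬ SameNF I L.lhs L.rhs) := by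
  have h1 := nfAlg_eval hnf hjoin c hc v L.lhs hL.1
  have h2 := nfAlg_eval hnf hjoin c hc v L.rhs hL.2
  unfold Lit.holds
  rw [h1, h2]
  by_cases hp : L.pos
  · rw [if_pos hp, if_pos hp]
    exact ⟨fun h => Quotient.exact h, fun h => Quotient.sound h⟩
  · rw [if_neg hp, if_neg hp]
    constructor
    · exact fun h hs => h (Quotient.sound hs)
    · exact fun h he => h (Quotient.exact he)

theorem nfAlg_clause (D : Clause F ar) (hD : Clause.IsGround D) :
    Clause.validIn (nfAlg I hnf hjoin c hc) D ↔ TrueIn I D := by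
  constructor
  · intro h
    obtain ⟨L, hLD, hh⟩ := h (fun _ => Quotient.mk _ ⟨groundTrm c hc, groundTrm_ground c hc⟩)
    exact ⟨L, hLD, (nfAlg_lit hnf hjoin c hc _ L (hD L hLD)).mp hh⟩
  · intro h v
    obtain ⟨L, hLD, hh⟩ := h
    exact ⟨L, hLD, (nfAlg_lit hnf hjoin c hc v L (hD L hLD)).mpr hh⟩

end Algebra

section IOmegaModel
variable (O : SimpOrd F ar) (sel : SelFun F ar O) (Sω : Set (PClause F ar))

theorem IOmega_nf_exists (s : Trm F ar) :
    ∃ u, RwStar (IOmega O sel Sω) s u ∧ NormalForm (IOmega O sel Sω) u :=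
  exists_nf O (fun _ hp => IOmega_gt O sel Sω hp) s

theorem IOmega_join : ∀ s u u' : Trm F ar, RwStar (IOmega O sel Sω) s u →
    RwStar (IOmega O sel Sω) s u' → NormalForm (IOmega O sel Sω) u →
    NormalForm (IOmega O sel Sω) u' → u = u' := by
  intro s u u' h1 h2 h3 h4
  exact nf_unique (fun l r r' h h' => IOmega_uniq O sel Sω h h')
    (IOmega_no_overlap O sel Sω) h1 h2 h3 h4

theorem entails_trueIn (c : F) (hc : ar c = 0) {Cs : Set (Clause F ar)} {D : Clause F ar}
    (hg : ∀ C ∈ Cs, Clause.IsGround C) (hent : Entails Cs D) (hD : Clause.IsGround D)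
    (htrue : ∀ C ∈ Cs, TrueIn (IOmega O sel Sω) C) : TrueIn (IOmega O sel Sω) D := by
  set A := nfAlg (IOmega O sel Sω) (IOmega_nf_exists O sel Sω) (IOmega_join O sel Sω) c hc
  have hvalid : ∀ C ∈ Cs, Clause.validIn A C := by
    intro C hC
    exact (nfAlg_clause _ _ c hc C (hg C hC)).mpr (htrue C hC)
  have := hent A hvalid
  exact (nfAlg_clause _ _ c hc D hD).mp this

end IOmegaModel


/-! ### Multiset extension: well-foundedness and transitivity -/

section MultisetExt
variable {α : Type}

def OneStep (lt : α → α → Prop) (M N : Multiset α) : Prop :=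
  ∃ (Z : Multiset α) (a : α) (Y : Multiset α),
    N = a ::ₘ Z ∧ M = Z + Y ∧ ∀ y ∈ Y, lt y a

theorem onestep_cons (lt : α → α → Prop) {N : Multiset α} {a : α} {M : Multiset α}
    (h : OneStep lt N (a ::ₘ M)) :
    (∃ M', N = a ::ₘ M' ∧ OneStep lt M' M) ∨ (∃ Y, N = M + Y ∧ ∀ y ∈ Y, lt y a) := by
  obtain ⟨Z, b, Y, hZ, hN, hY⟩ := h
  rcases (Multiset.cons_eq_cons.mp hZ) with ⟨rfl, rfl⟩ | ⟨hne, cs, hcs1, hcs2⟩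
  · exact Or.inr ⟨Y, hN, hY⟩
  · refine Or.inl ⟨cs + Y, ?_, ⟨cs, b, Y, hcs1, rfl, hY⟩⟩
    rw [hN, hcs2, Multiset.cons_add]

theorem acc_add_small {lt : α → α → Prop} {a : α}
    (wfa : ∀ b, lt b a → ∀ N, Acc (OneStep lt) N → Acc (OneStep lt) (b ::ₘ N))
    {M : Multiset α} (hM : Acc (OneStep lt) M) {Y : Multiset α} (hY : ∀ y ∈ Y, lt y a) :
    Acc (OneStep lt) (M + Y) := by
  induction Y using Multiset.induction with
  | empty => simpa using hM
  | cons y Y ih =>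
    have : M + y ::ₘ Y = y ::ₘ (M + Y) := by
      simp [Multiset.add_cons]
    rw [this]
    exact wfa y (hY y (Multiset.mem_cons_self y Y)) _
      (ih fun z hz => hY z (Multiset.mem_cons_of_mem hz))

theorem acc_cons {lt : α → α → Prop} (a : α)
    (wfa : ∀ b, lt b a → ∀ N, Acc (OneStep lt) N → Acc (OneStep lt) (b ::ₘ N))
    {M : Multiset α} (hM : Acc (OneStep lt) M) : Acc (OneStep lt) (a ::ₘ M) := by
  induction hM with
  | intro M hacc ih =>
    constructor
    intro N hN
    rcases onestep_cons lt hN with ⟨M', rfl, hM'⟩ | ⟨Y, rfl, hY⟩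
    · exact ih M' hM'
    · exact acc_add_small wfa (Acc.intro M hacc) hY

theorem acc_cons_of_acc {lt : α → α → Prop} (hwf : WellFounded lt) (a : α) :
    ∀ M : Multiset α, Acc (OneStep lt) M → Acc (OneStep lt) (a ::ₘ M) := by
  induction (hwf.apply a) with
  | intro a _ iha => exact fun M hM => acc_cons a (fun b hb N hN => iha b hb N hN) hM

theorem acc_onestep {lt : α → α → Prop} (hwf : WellFounded lt) (M : Multiset α) :
    Acc (OneStep lt) M := by
  induction M using Multiset.induction with
  | empty =>
    constructor
    intro N hN
    obtain ⟨Z, b, Y, hZ, _, _⟩ := hN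
    exact absurd hZ.symm (Multiset.cons_ne_zero)
  | cons a M ihM => exact acc_cons_of_acc hwf a M ihM

theorem wf_onestep {lt : α → α → Prop} (hwf : WellFounded lt) :
    WellFounded (OneStep lt) := ⟨acc_onestep hwf⟩



theorem transGen_onestep {r : α → α → Prop} :
    ∀ (X : Multiset α), X ≠ 0 → ∀ (Z Y : Multiset α), (∀ y ∈ Y, ∃ x ∈ X, r x y) →
      Relation.TransGen (OneStep (flip r)) (Z + Y) (Z + X) := by
  classical
  intro X
  induction X using Multiset.induction with
  | empty => intro h; exact absurd rfl h
  | cons x X' ih =>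
    intro _ Z Y hY
    by_cases hX' : X' = 0
    · subst hX'
      refine Relation.TransGen.single ⟨Z, x, Y, ?_, rfl, ?_⟩
      · rw [add_comm, Multiset.cons_add, zero_add]
      · intro y hy
        obtain ⟨x', hx', hr⟩ := hY y hy
        rcases Multiset.mem_cons.mp hx' with rfl | h0
        · exact hr
        · simp at h0
    · set Y₁ := Y.filter (fun y => r x y) with hY₁
      set Y₂ := Y.filter (fun y => ¬ r x y) with hY₂
      have hsplit : Y₁ + Y₂ = Y := Multiset.filter_add_not _ Y
      have step1 : OneStep (flip r) (Z + Y) ((x ::ₘ Z) + Y₂) := by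
        refine ⟨Z + Y₂, x, Y₁, by rw [Multiset.cons_add], ?_, ?_⟩
        · rw [add_assoc, add_comm Y₂ Y₁, hsplit]
        · intro y hy
          exact (Multiset.mem_filter.mp hy).2
      have step2 : Relation.TransGen (OneStep (flip r)) ((x ::ₘ Z) + Y₂) (Z + (x ::ₘ X')) := by
        have : Z + (x ::ₘ X') = (x ::ₘ Z) + X' := by
          rw [Multiset.cons_add, Multiset.add_cons]
        rw [this]
        refine ih hX' (x ::ₘ Z) Y₂ ?_
        intro y hy
        obtain ⟨x', hx', hr⟩ := hY y (Multiset.mem_of_mem_filter hy)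
        rcases Multiset.mem_cons.mp hx' with rfl | h0
        · exact absurd hr (Multiset.mem_filter.mp hy).2
        · exact ⟨x', h0, hr⟩
      exact Relation.TransGen.head step1 step2

theorem multGT_wf {r : α → α → Prop} (hwf : WellFounded (fun x y => r y x)) :
    WellFounded (fun M N : Multiset α => MultGT r N M) := by
  have h1 : WellFounded (Relation.TransGen (OneStep (flip r))) :=
    (wf_onestep hwf).transGen
  refine Subrelation.wf ?_ h1
  rintro M N ⟨X, Y, Z, hX, rfl, rfl, hY⟩
  exact transGen_onestep X hX Z Y hY

theorem multiset_riesz {α : Type*} {Z₁ Y₁ Z₂ X₂ : Multiset α} (h : Z₁ + Y₁ = Z₂ + X₂) :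
    ∃ A B C D : Multiset α, Z₁ = A + B ∧ Z₂ = A + C ∧ Y₁ = C + D ∧ X₂ = B + D := by
  classical
  refine ⟨Z₁ ∩ Z₂, Z₁ - Z₂, Z₂ - Z₁, Y₁ - (Z₂ - Z₁), ?_, ?_, ?_, ?_⟩ <;>
  · ext t
    have hc := congrArg (Multiset.count t) h
    simp only [Multiset.count_add, Multiset.count_sub, Multiset.count_inter] at *
    omega

theorem multGT_trans {r : α → α → Prop} (hr : ∀ a b c : α, r a b → r b c → r a c)
    {N M P : Multiset α} (h1 : MultGT r N M) (h2 : MultGT r M P) : MultGT r N P := by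
  obtain ⟨X₁, Y₁, Z₁, hX₁, hN, hM, hY₁⟩ := h1
  obtain ⟨X₂, Y₂, Z₂, hX₂, hM', hP, hY₂⟩ := h2
  obtain ⟨A, B, C, D, hZ₁, hZ₂, hY₁d, hX₂d⟩ := multiset_riesz (hM.symm.trans hM')
  refine ⟨B + X₁, C + Y₂, A, ?_, ?_, ?_, ?_⟩
  · intro h0
    have hle : X₁ ≤ (0 : Multiset α) := h0 ▸ le_add_self
    exact hX₁ (Multiset.le_zero.mp hle)
  · rw [hN, hZ₁, add_assoc]
  · rw [hP, hZ₂, add_assoc]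
  · intro y hy
    rcases Multiset.mem_add.mp hy with hyC | hyY₂
    · have hyY₁ : y ∈ Y₁ := by rw [hY₁d]; exact Multiset.mem_add.mpr (Or.inl hyC)
      obtain ⟨x, hx, hr⟩ := hY₁ y hyY₁
      exact ⟨x, Multiset.mem_add.mpr (Or.inr hx), hr⟩
    · obtain ⟨x₂, hx₂, hr₂⟩ := hY₂ y hyY₂
      rw [hX₂d] at hx₂
      rcases Multiset.mem_add.mp hx₂ with hB | hD
      · exact ⟨x₂, Multiset.mem_add.mpr (Or.inl hB), hr₂⟩
      · have : x₂ ∈ Y₁ := by rw [hY₁d]; exact Multiset.mem_add.mpr (Or.inr hD)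
        obtain ⟨x₁, hx₁, hr₁⟩ := hY₁ x₂ this
        exact ⟨x₁, Multiset.mem_add.mpr (Or.inr hx₁), hr _ _ _ hr₁ hr₂⟩


theorem litGT_trans {O : SimpOrd F ar} {L M N : Lit F ar}
    (h1 : litGT O L M) (h2 : litGT O M N) : litGT O L N :=
  multGT_trans (r := O.gt) (fun _ _ _ ha hb => O.trans ha hb) h1 h2

theorem clauseGT_trans {O : SimpOrd F ar} {C D E : Clause F ar}
    (h1 : clauseGT O C D) (h2 : clauseGT O D E) : clauseGT O C E :=
  multGT_trans (r := litGT O) (fun _ _ _ ha hb => litGT_trans ha hb) h1 h2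

theorem clauseGT_wf (O : SimpOrd F ar) :
    WellFounded (fun D C : Clause F ar => clauseGT O C D) := by
  have h1 : WellFounded (fun M N : Multiset (Trm F ar) => MultGT O.gt N M) :=
    multGT_wf O.wf
  have h2 : WellFounded (fun L M : Lit F ar => litGT O M L) :=
    InvImage.wf Lit.ms h1
  exact multGT_wf h2

end MultisetExt


/-! ### Redundancy formula lemmas -/

theorem Trm.subst_agree {σ σ' : Subst F ar} : ∀ t : Trm F ar,
    (∀ x ∈ t.fvars, σ x = σ' x) → Trm.subst σ t = Trm.subst σ' t := by
  intro t
  induction t with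
  | var y => intro h; exact h y rfl
  | app f a ih =>
    intro h
    simp only [Trm.subst]
    congr 1
    funext i
    exact ih i (fun x hx => h x (Set.mem_iUnion.mpr ⟨i, hx⟩))

theorem RForm.realize_agree (O : SimpOrd F ar) : ∀ (R : RForm F ar) {v v' : Subst F ar},
    (∀ x ∈ R.fvars, v x = v' x) → (RForm.realize O v R ↔ RForm.realize O v' R) := by
  intro R
  induction R with
  | falsum => intro v v' _; exact Iff.rfl
  | verum => intro v v' _; exact Iff.rfl
  | eq s t =>
    intro v v' h
    show Trm.subst v s = Trm.subst v t ↔ Trm.subst v' s = Trm.subst v' t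
    rw [Trm.subst_agree s (fun x hx => h x (Or.inl hx)),
      Trm.subst_agree t (fun x hx => h x (Or.inr hx))]
  | gt s t =>
    intro v v' h
    show O.gt (Trm.subst v s) (Trm.subst v t) ↔ O.gt (Trm.subst v' s) (Trm.subst v' t)
    rw [Trm.subst_agree s (fun x hx => h x (Or.inl hx)),
      Trm.subst_agree t (fun x hx => h x (Or.inr hx))]
  | and a b iha ihb =>
    intro v v' h
    show RForm.realize O v a ∧ _ ↔ _
    rw [iha (fun x hx => h x (Or.inl hx)), ihb (fun x hx => h x (Or.inr hx))]
    exact Iff.rfl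
  | or a b iha ihb =>
    intro v v' h
    show RForm.realize O v a ∨ _ ↔ _
    rw [iha (fun x hx => h x (Or.inl hx)), ihb (fun x hx => h x (Or.inr hx))]
    exact Iff.rfl
  | ex x a iha =>
    intro v v' h
    show (∃ g : Trm F ar, g.IsGround ∧ _) ↔ _
    refine exists_congr fun g => and_congr_right fun _ => iha fun y hy => ?_
    by_cases hyx : y = x
    · subst hyx; rw [Function.update_self, Function.update_self]
    · rw [Function.update_of_ne hyx, Function.update_of_ne hyx]
      exact h y ⟨hy, hyx⟩

theorem RForm.fvars_subst_sub (σ : Subst F ar) : ∀ R : RForm F ar,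
    RForm.fvars (R.subst σ) ⊆ ⋃ x ∈ R.fvars, (σ x).fvars := by
  intro R
  induction R generalizing σ with
  | falsum => intro z hz; exact absurd hz (by simp [RForm.subst, RForm.fvars])
  | verum => intro z hz; exact absurd hz (by simp [RForm.subst, RForm.fvars])
  | eq s t =>
    intro z hz
    rcases hz with hz | hz
    · obtain ⟨x, hx, hzx⟩ := Set.mem_iUnion₂.mp (Trm.fvars_subst_sub σ s hz)
      exact Set.mem_iUnion₂.mpr ⟨x, Or.inl hx, hzx⟩
    · obtain ⟨x, hx, hzx⟩ := Set.mem_iUnion₂.mp (Trm.fvars_subst_sub σ t hz)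
      exact Set.mem_iUnion₂.mpr ⟨x, Or.inr hx, hzx⟩
  | gt s t =>
    intro z hz
    rcases hz with hz | hz
    · obtain ⟨x, hx, hzx⟩ := Set.mem_iUnion₂.mp (Trm.fvars_subst_sub σ s hz)
      exact Set.mem_iUnion₂.mpr ⟨x, Or.inl hx, hzx⟩
    · obtain ⟨x, hx, hzx⟩ := Set.mem_iUnion₂.mp (Trm.fvars_subst_sub σ t hz)
      exact Set.mem_iUnion₂.mpr ⟨x, Or.inr hx, hzx⟩
  | and a b iha ihb =>
    intro z hz
    rcases hz with hz | hz
    · obtain ⟨x, hx, hzx⟩ := Set.mem_iUnion₂.mp (iha σ hz)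
      exact Set.mem_iUnion₂.mpr ⟨x, Or.inl hx, hzx⟩
    · obtain ⟨x, hx, hzx⟩ := Set.mem_iUnion₂.mp (ihb σ hz)
      exact Set.mem_iUnion₂.mpr ⟨x, Or.inr hx, hzx⟩
  | or a b iha ihb =>
    intro z hz
    rcases hz with hz | hz
    · obtain ⟨x, hx, hzx⟩ := Set.mem_iUnion₂.mp (iha σ hz)
      exact Set.mem_iUnion₂.mpr ⟨x, Or.inl hx, hzx⟩
    · obtain ⟨x, hx, hzx⟩ := Set.mem_iUnion₂.mp (ihb σ hz)
      exact Set.mem_iUnion₂.mpr ⟨x, Or.inr hx, hzx⟩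
  | ex x a iha =>
    intro z hz
    obtain ⟨hz1, hz2⟩ := hz
    obtain ⟨y, hy, hzy⟩ := Set.mem_iUnion₂.mp (iha _ hz1)
    by_cases hyx : y = x
    · subst hyx
      simp only [if_pos rfl] at hzy
      exact absurd hzy hz2
    · rw [if_neg hyx] at hzy
      exact Set.mem_iUnion₂.mpr ⟨y, ⟨hy, hyx⟩, hzy⟩

theorem groundingFor_fvars {θ : Subst F ar} {cl : Clause F ar} (h : GroundingFor θ cl) :
    ∀ x ∈ Clause.fvars cl, (θ x).IsGround := by
  intro x hx
  obtain ⟨L, hL, hxL⟩ := hx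
  have hg : (Lit.subst θ L).IsGround := h _ (Multiset.mem_map_of_mem _ hL)
  rcases hxL with hxL | hxL
  · exact Trm.ground_of_subst_ground hg.1 x hxL
  · exact Trm.ground_of_subst_ground hg.2 x hxL

theorem realize_const (O : SimpOrd F ar) {R : RForm F ar} {θ : Subst F ar}
    (hcl : ∀ x ∈ R.fvars, (θ x).IsGround) (v v' : Subst F ar) :
    RForm.realize O v (R.subst θ) ↔ RForm.realize O v' (R.subst θ) := by
  apply RForm.realize_agree
  intro x hx
  obtain ⟨y, hy, hxy⟩ := Set.mem_iUnion₂.mp (RForm.fvars_subst_sub θ R hx)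
  rw [Trm.fvars_ground (hcl y hy)] at hxy
  exact absurd hxy (Set.notMem_empty x)

theorem RSat_falsum (O : SimpOrd F ar) (c : F) (hc : ar c = 0) {θ : Subst F ar}
    (h : RSat O θ RForm.falsum) : False :=
  h (fun _ => groundTrm c hc) (fun _ => groundTrm_ground c hc)

theorem RSat_or_split (O : SimpOrd F ar) (c : F) (hc : ar c = 0) {θ : Subst F ar}
    {R₁ R₂ : RForm F ar}
    (h1 : ∀ x ∈ R₁.fvars, (θ x).IsGround) (h2 : ∀ x ∈ R₂.fvars, (θ x).IsGround)
    (h : RSat O θ (RForm.or R₁ R₂)) : RSat O θ R₁ ∨ RSat O θ R₂ := by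
  set v₀ : Subst F ar := fun _ => groundTrm c hc with hv₀
  have hv₀g : ∀ x, (v₀ x).IsGround := fun _ => groundTrm_ground c hc
  have hor : RForm.realize O v₀ (R₁.subst θ) ∨ RForm.realize O v₀ (R₂.subst θ) := h v₀ hv₀g
  rcases hor with hh | hh
  · exact Or.inl (fun v _ => (realize_const O h1 v v₀).mpr hh)
  · exact Or.inr (fun v _ => (realize_const O h2 v v₀).mpr hh)


/-! ### Saturation invariants -/

section SaturationLemmas
variable {O : SimpOrd F ar} {sel : SelFun F ar O} (𝕊 : Saturation O sel)

theorem gstar_ground {S : Set (PClause F ar)} {D : Clause F ar} (h : D ∈ gstar S) :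
    Clause.IsGround D := by
  obtain ⟨pc, hpc, θ, hD, hg⟩ := h
  exact hg

theorem gstar_step (i : ℕ) : gstar (𝕊.S i) ⊆ gstar (𝕊.S (i + 1)) := by
  rcases 𝕊.step i with ⟨prems, σ, concl, _, _, hS⟩ | ⟨pc, hpc, R₂, h, _, hS⟩
  · rw [hS]
    rintro D ⟨pc, hpc, θ, hDθ, hg⟩
    exact ⟨pc, Or.inl hpc, θ, hDθ, hg⟩
  · rw [hS]
    rintro D ⟨pc', hpc', θ, hDθ, hg⟩
    by_cases hpp : pc' = pc
    · subst hpp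
      exact ⟨⟨pc'.cl, .or pc'.rf R₂, h⟩, Or.inr rfl, θ, hDθ, hg⟩
    · exact ⟨pc', Or.inl ⟨hpc', hpp⟩, θ, hDθ, hg⟩

theorem gstar_mono {i j : ℕ} (hij : i ≤ j) : gstar (𝕊.S i) ⊆ gstar (𝕊.S j) := by
  induction j, hij using Nat.le_induction with
  | base => exact fun _ h => h
  | succ j hij ih => exact fun D hD => gstar_step 𝕊 j (ih hD)

theorem redundant_mono {S S' : Set (Clause F ar)} (h : S ⊆ S') {D : Clause F ar}
    (hD : Redundant O S D) : Redundant O S' D := by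
  obtain ⟨Cs, h1, h2, h3⟩ := hD
  exact ⟨Cs, fun C hC => h (h1 C hC), h2, h3⟩

theorem rsat_invariant (c : F) (hc : ar c = 0) : ∀ i : ℕ, ∀ pc ∈ 𝕊.S i, ∀ θ : Subst F ar,
    GroundingFor θ pc.cl → RSat O θ pc.rf →
    Redundant O (gstar (𝕊.S i)) (Clause.subst θ pc.cl) := by
  intro i
  induction i with
  | zero =>
    intro pc hpc θ _ hsat
    rw [𝕊.init pc hpc] at hsat
    exact (RSat_falsum O c hc hsat).elim
  | succ i ih =>
    rcases 𝕊.step i with ⟨prems, σ, concl, hprems, hinf, hS⟩ | ⟨pc₀, hpc₀, R₂, h, hred, hS⟩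
    · intro pc hpc θ hg hsat
      rw [hS] at hpc
      rcases hpc with hpc | hpc
      · exact redundant_mono (gstar_step 𝕊 i) (ih pc hpc θ hg hsat)
      · have hpc' : pc = ⟨concl, RForm.falsum, RForm.falsum_fvars_sub _⟩ := hpc
        subst hpc'
        exact (RSat_falsum O c hc hsat).elim
    · intro pc hpc θ hg hsat
      rw [hS] at hpc
      rcases hpc with ⟨hpc, _⟩ | hpc
      · exact redundant_mono (gstar_step 𝕊 i) (ih pc hpc θ hg hsat)
      · have hpc' : pc = ⟨pc₀.cl, .or pc₀.rf R₂, h⟩ := hpc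
        subst hpc'
        have hfv : ∀ x ∈ (RForm.or pc₀.rf R₂).fvars, (θ x).IsGround :=
          fun x hx => groundingFor_fvars hg x (h hx)
        have h1 : ∀ x ∈ pc₀.rf.fvars, (θ x).IsGround := fun x hx => hfv x (Or.inl hx)
        have h2 : ∀ x ∈ R₂.fvars, (θ x).IsGround := fun x hx => hfv x (Or.inr hx)
        rcases RSat_or_split O c hc h1 h2 hsat with hh | hh
        · exact redundant_mono (gstar_step 𝕊 i) (ih pc₀ hpc₀ θ hg hh)
        · exact redundant_mono (gstar_step 𝕊 i) (hred θ hg hh)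

end SaturationLemmas



/-- If a ground clause `C ∈ S i *` is false in `I_ω`, then there
exists a persistent ground clause `D` with `C ⪰ D` that is false in `I_ω`. -/
theorem false_persistent_below {F : Type} {ar : F → ℕ} (hF : Finite F) (hconst : ∃ c : F, ar c = 0)
    (O : SimpOrd F ar) (sel : SelFun F ar O) (𝕊 : Saturation O sel)
    (i : ℕ) (C : Clause F ar) (hC : C ∈ gstar (𝕊.S i))
    (hfalse : ¬ TrueIn (IOmega O sel 𝕊.Somega) C) :
    ∃ D : Clause F ar, 𝕊.Persistent D ∧ clauseGE O C D ∧
      ¬ TrueIn (IOmega O sel 𝕊.Somega) D := by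
  classical
  obtain ⟨c, hc⟩ := hconst
  suffices H : ∀ C : Clause F ar, ∀ i : ℕ, C ∈ gstar (𝕊.S i) →
      ¬ TrueIn (IOmega O sel 𝕊.Somega) C →
      ∃ D : Clause F ar, 𝕊.Persistent D ∧ clauseGE O C D ∧
        ¬ TrueIn (IOmega O sel 𝕊.Somega) D from H C i hC hfalse
  clear hC hfalse i C
  intro C
  induction C using (clauseGT_wf O).induction with
  | _ C ihC =>
    intro i hC hfalse
    by_cases hpers : ∃ i₀, ∀ j ≥ i₀, C ∈ gndS O (𝕊.S j)
    · obtain ⟨i₀, hi₀⟩ := hpers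
      refine ⟨C, ?_, Or.inr rfl, hfalse⟩
      exact Set.mem_iUnion.mpr ⟨i₀, Set.mem_iInter.mpr fun j =>
        Set.mem_iInter.mpr fun hj => hi₀ j hj⟩
    · push_neg at hpers
      obtain ⟨j, hji, hnot⟩ := hpers i
      have hCj : C ∈ gstar (𝕊.S j) := gstar_mono 𝕊 hji hC
      obtain ⟨pc, hpc, θ, hCθ, hgr⟩ := hCj
      have hsat : RSat O θ pc.rf := by
        by_contra hns
        exact hnot (Set.mem_iUnion₂.mpr ⟨pc, hpc, θ, hCθ, hgr, hns⟩)
      have hgnd : GroundingFor θ pc.cl := by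
        rw [GroundingFor, ← hCθ]; exact hgr
      have hred := rsat_invariant 𝕊 c hc j pc hpc θ hgnd hsat
      rw [← hCθ] at hred
      obtain ⟨Cs, hCsS, hent, hlt⟩ := hred
      have hex : ∃ Ck ∈ Cs, ¬ TrueIn (IOmega O sel 𝕊.Somega) Ck := by
        by_contra hall
        push_neg at hall
        exact hfalse (entails_trueIn O sel 𝕊.Somega c hc
          (fun C' hC' => gstar_ground (hCsS C' hC')) hent hgr
          (fun C' hC' => hall C' hC'))
      obtain ⟨Ck, hCk, hCkfalse⟩ := hex
      obtain ⟨D, hD1, hD2, hD3⟩ := ihC Ck (hlt Ck hCk) j (hCsS Ck hCk) hCkfalse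
      refine ⟨D, hD1, ?_, hD3⟩
      rcases hD2 with hD2 | rfl
      · exact Or.inl (clauseGT_trans (hlt Ck hCk) hD2)
      · exact Or.inl (hlt Ck hCk)

end PaRC
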